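/- Let C be an additive Z/2-graded category in which the product of any two degree-one morphisms is zero, and suppose for each object X the endomorphism ring of X in the degree-zero part is local. Then End_C(X) is local for each such X; in particular if the underlying degree-zero category is Krull–Remak–Schmidt, so is C, and both categories have the same indecomposable objects and the same isomorphism classes of objects. -/
import Mathlib


/-!
STATEMENT 3: Let C be an additive Z/2-graded category in which the product of any two
degree-one morphisms is zero (here realized as the graded category with
Hom_C(X,Y) = Hom_H(X,Y) ⊕ E X Y, whose degree-zero part is the additive category H),
and suppose for each object X the endomorphism ring of X in the degree-zero part
(i.e. End_H(X)) is local.  Then End_C(X) is local for each X; in particular, if the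
degree-zero category is Krull–Remak–Schmidt, so is C; and C and H have the same
indecomposable objects (characterized by absence of nontrivial idempotents) and the
same isomorphism classes of objects.
-/

open CategoryTheory

universe u v w

variable {H : Type u} [Category.{v} H] [Preadditive H]
  (E : H → H → Type w) [∀ X Y : H, AddCommGroup (E X Y)]
  (push : ∀ {X Y Y' : H}, (Y ⟶ Y') → E X Y → E X Y')
  (pull : ∀ {X X' Y : H}, (X' ⟶ X) → E X Y → E X' Y)

/-- Composition in the Z/2-graded category `C`. Degree-one morphisms square to zero. -/
def gradedComp {X Y Z : H} (f : (X ⟶ Y) × E X Y) (g : (Y ⟶ Z) × E Y Z) :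
    (X ⟶ Z) × E X Z :=
  (f.1 ≫ g.1, push g.1 f.2 + pull f.1 g.2)

/-- A morphism of `C` is a unit (isomorphism) if it has a two-sided inverse. -/
def IsCUnit {X Y : H} (f : (X ⟶ Y) × E X Y) : Prop :=
  ∃ g : (Y ⟶ X) × E Y X,
    gradedComp E push pull f g = ((𝟙 X, 0) : (X ⟶ X) × E X X) ∧
    gradedComp E push pull g f = ((𝟙 Y, 0) : (Y ⟶ Y) × E Y Y)

theorem graded_category_local_KRS_same_indecomposables
    (push_id : ∀ {X Y : H} (η : E X Y), push (𝟙 Y) η = η)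
    (push_comp : ∀ {X Y Y' Y'' : H} (g : Y ⟶ Y') (g' : Y' ⟶ Y'') (η : E X Y),
      push (g ≫ g') η = push g' (push g η))
    (pull_id : ∀ {X Y : H} (η : E X Y), pull (𝟙 X) η = η)
    (pull_comp : ∀ {X X' X'' Y : H} (f : X' ⟶ X) (f' : X'' ⟶ X') (η : E X Y),
      pull (f' ≫ f) η = pull f' (pull f η))
    (push_pull : ∀ {X X' Y Y' : H} (f : X' ⟶ X) (g : Y ⟶ Y') (η : E X Y),
      push g (pull f η) = pull f (push g η))
    (push_add : ∀ {X Y Y' : H} (g : Y ⟶ Y') (η θ : E X Y),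
      push g (η + θ) = push g η + push g θ)
    (pull_add : ∀ {X X' Y : H} (f : X' ⟶ X) (η θ : E X Y),
      pull f (η + θ) = pull f η + pull f θ)
    (push_neg : ∀ {X Y Y' : H} (g : Y ⟶ Y') (η : E X Y), push g (-η) = -push g η)
    (pull_neg : ∀ {X X' Y : H} (f : X' ⟶ X) (η : E X Y), pull f (-η) = -pull f η)
    (push_zero : ∀ {X Y Y' : H} (η : E X Y), push (0 : Y ⟶ Y') η = 0)
    (pull_zero : ∀ {X X' Y : H} (η : E X Y), pull (0 : X' ⟶ X) η = 0)
    -- the endomorphism ring of each object in the degree-zero part is local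
    (hloc : ∀ X : H, IsLocalRing (End X)) :
    -- (1) the endomorphism ring of each object of C is local:
    -- the identity is not 0, and for every endomorphism f of X in C,
    -- f or (𝟙 X + 0) - f is a unit
    (∀ X : H, ((𝟙 X, 0) : (X ⟶ X) × E X X) ≠ 0 ∧
      ∀ f : (X ⟶ X) × E X X,
        IsCUnit E push pull f ∨
        IsCUnit E push pull (((𝟙 X, 0) : (X ⟶ X) × E X X) - f)) ∧
    -- (2) C and H have the same isomorphism classes of objects
    (∀ X Y : H, Nonempty (X ≅ Y) ↔
      ∃ f : (X ⟶ Y) × E X Y, IsCUnit E push pull f) ∧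
    -- (3) C and H have the same indecomposable objects: X has only trivial
    -- idempotent endomorphisms in H iff it has only trivial idempotents in C
    (∀ X : H,
      (∀ e : X ⟶ X, e ≫ e = e → e = 0 ∨ e = 𝟙 X) ↔
      (∀ e : (X ⟶ X) × E X X, gradedComp E push pull e e = e →
        e = 0 ∨ e = ((𝟙 X, 0) : (X ⟶ X) × E X X))) := by
  
  have push0 : ∀ {X Y Y' : H} (g : Y ⟶ Y'), push g (0 : E X Y) = 0 := by
    intro X Y Y' g
    have h := push_add g (0 : E X Y) 0
    rw [add_zero] at h
    exact (left_eq_add.mp h)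
  have pull0 : ∀ {X X' Y : H} (f : X' ⟶ X), pull f (0 : E X Y) = 0 := by
    intro X X' Y f
    have h := pull_add f (0 : E X Y) 0
    rw [add_zero] at h
    exact (left_eq_add.mp h)
  have unitOf : ∀ {X Y : H} (f : (X ⟶ Y) × E X Y) (b : Y ⟶ X),
      f.1 ≫ b = 𝟙 X → b ≫ f.1 = 𝟙 Y → IsCUnit E push pull f := by
    intro X Y f b hab hba
    refine ⟨(b, -pull b (push b f.2)), ?_, ?_⟩
    · unfold gradedComp
      refine Prod.ext hab ?_
      show push b f.2 + pull f.1 (-pull b (push b f.2)) = 0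
      rw [pull_neg, ← pull_comp, hab, pull_id]
      exact add_neg_cancel _
    · unfold gradedComp
      refine Prod.ext hba ?_
      show push f.1 (-pull b (push b f.2)) + pull b f.2 = 0
      rw [push_neg, push_pull, ← push_comp, hba, push_id]
      exact neg_add_cancel _
  refine ⟨?_, ?_, ?_⟩
  · intro X
    haveI := hloc X
    constructor
    · intro h
      have h1 : (𝟙 X : X ⟶ X) = 0 := congrArg Prod.fst h
      exact one_ne_zero (α := End X) h1
    · intro f
      have key : (show End X from f.1) + (show End X from 𝟙 X - f.1) = 1 := by
        show f.1 + (𝟙 X - f.1) = 𝟙 X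
        abel
      rcases IsLocalRing.isUnit_or_isUnit_of_add_one key with h | h
      · left
        obtain ⟨u, hu⟩ := h
        have hu' : (u : End X) = f.1 := hu
        refine unitOf f u.inv ?_ ?_
        · show f.1 ≫ u.inv = 𝟙 X
          rw [← hu']; exact u.inv_val
        · show u.inv ≫ f.1 = 𝟙 X
          rw [← hu']; exact u.val_inv
      · right
        obtain ⟨u, hu⟩ := h
        have hu' : (u : End X) = 𝟙 X - f.1 := hu
        refine unitOf (((𝟙 X, 0) : (X ⟶ X) × E X X) - f) u.inv ?_ ?_
        · show (𝟙 X - f.1) ≫ u.inv = 𝟙 X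
          rw [← hu']; exact u.inv_val
        · show u.inv ≫ (𝟙 X - f.1) = 𝟙 X
          rw [← hu']; exact u.val_inv
  · intro X Y
    constructor
    · rintro ⟨i⟩
      exact ⟨(i.hom, 0), unitOf (i.hom, 0) i.inv i.hom_inv_id i.inv_hom_id⟩
    · rintro ⟨f, g, h1, h2⟩
      exact ⟨⟨f.1, g.1, congrArg Prod.fst h1, congrArg Prod.fst h2⟩⟩
  · intro X
    constructor
    · intro hH e he
      have h1 : e.1 ≫ e.1 = e.1 := congrArg Prod.fst he
      have h2 : push e.1 e.2 + pull e.1 e.2 = e.2 := congrArg Prod.snd he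
      rcases hH e.1 h1 with h | h
      · left
        refine Prod.ext h ?_
        rw [h, push_zero, pull_zero, zero_add] at h2
        exact h2.symm
      · right
        refine Prod.ext h ?_
        rw [h, push_id, pull_id] at h2
        exact left_eq_add.mp h2.symm
    · intro hC e he
      have hidem : gradedComp E push pull ((e, 0) : (X ⟶ X) × E X X) (e, 0) = (e, 0) := by
        unfold gradedComp
        refine Prod.ext he ?_
        show push e 0 + pull e 0 = 0
        rw [push0, pull0, add_zero]
      rcases hC (e, 0) hidem with h | h
      · exact Or.inl (congrArg Prod.fst h)
      · exact Or.inr (congrArg Prod.fst h)
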